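/- If Γ ⊆ Ω(G) is nonempty and |⋃Γ| + |⋂Γ| = 2α(G), then |⋃Γ| − |⋂Γ| = 2μ(G[⋃Γ]), where μ denotes the maximum matching number of the induced subgraph. -/

import Mathlib

open Set

variable {V : Type*}

/-- `S` is an independent set of `G`. -/
def IndepSet (G : SimpleGraph V) (S : Set V) : Prop :=
  ∀ x ∈ S, ∀ y ∈ S, ¬ G.Adj x y

/-- The independence number `α(G)`. -/
noncomputable def alpha (G : SimpleGraph V) : ℕ :=
  sSup {n | ∃ S : Set V, IndepSet G S ∧ S.ncard = n}

/-- `S` is a maximum independent set of `G`. -/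
def MaxIndep (G : SimpleGraph V) (S : Set V) : Prop :=
  IndepSet G S ∧ S.ncard = alpha G

/-- `Ω(G)`, the family of all maximum independent sets. -/
def Omega (G : SimpleGraph V) : Set (Set V) := {S | MaxIndep G S}

/-- `core(G)`, the intersection of all maximum independent sets. -/
def core (G : SimpleGraph V) : Set V := ⋂₀ Omega G

/-- `corona(G)`, the union of all maximum independent sets. -/
def corona (G : SimpleGraph V) : Set V := ⋃₀ Omega G

/-- The matching number `μ(G)`. -/
noncomputable def matchNum (G : SimpleGraph V) : ℕ :=
  sSup {n | ∃ M : G.Subgraph, M.IsMatching ∧ M.edgeSet.ncard = n}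

/-- A matching from `X` into `Y`: an injection `f` on `X` into `Y` such that each `x ∈ X`
is adjacent to `f x` and the edges `{x, f x}` are pairwise disjoint. -/
def MatchingFrom (G : SimpleGraph V) (X Y : Set V) : Prop :=
  ∃ f : V → V, Set.InjOn f X ∧ (∀ x ∈ X, f x ∈ Y ∧ G.Adj x (f x)) ∧
    ∀ x ∈ X, ∀ y ∈ X, x ≠ y → f x ≠ y

lemma indep_ncard_le_alpha [Fintype V] {G : SimpleGraph V} {S : Set V}
    (hS : IndepSet G S) : S.ncard ≤ alpha G := by
  apply le_csSup
  · refine ⟨Fintype.card V, ?_⟩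
    rintro n ⟨T, -, rfl⟩
    simpa [Set.ncard_univ, Nat.card_eq_fintype_card] using
      Set.ncard_le_ncard (Set.subset_univ T) Set.finite_univ
  · exact ⟨S, hS, rfl⟩

lemma swap_hall [Fintype V] {G : SimpleGraph V} {A S X : Set V}
    (hA : MaxIndep G A) (hS : IndepSet G S) (hX : X ⊆ S \ A) :
    X.ncard ≤ ({y | ∃ x ∈ X, G.Adj x y} ∩ (A \ S)).ncard := by
  classical
  set N : Set V := {y | ∃ x ∈ X, G.Adj x y} with hN
  have hXS : X ⊆ S := fun x hx => (hX hx).1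
  have hindep : IndepSet G ((A \ N) ∪ X) := by
    rintro a (⟨haA, haN⟩ | haX) b (⟨hbA, hbN⟩ | hbX) hadj
    · exact hA.1 a haA b hbA hadj
    · exact haN ⟨b, hbX, hadj.symm⟩
    · exact hbN ⟨a, haX, hadj⟩
    · exact hS a (hXS haX) b (hXS hbX) hadj
  have hdisj : Disjoint (A \ N) X := by
    rw [Set.disjoint_right]
    exact fun x hx hx' => (hX hx).2 hx'.1
  have h1 : (A \ N).ncard + X.ncard ≤ A.ncard := by
    rw [← Set.ncard_union_eq hdisj]
    exact hA.2 ▸ indep_ncard_le_alpha hindep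
  have h3 : (A ∩ N).ncard + (A \ N).ncard = A.ncard :=
    Set.ncard_inter_add_ncard_diff_eq_ncard A N
  have h4 : (A ∩ N) ⊆ N ∩ (A \ S) := by
    rintro y ⟨hyA, x, hx, hadj⟩
    exact ⟨⟨x, hx, hadj⟩, hyA, fun hyS => hS x (hXS hx) y hyS hadj⟩
  have h5 : (A ∩ N).ncard ≤ (N ∩ (A \ S)).ncard :=
    Set.ncard_le_ncard h4 (Set.toFinite _)
  omega

lemma hall_cond [Fintype V] {G : SimpleGraph V} (Λ : Finset (Set V)) :
    ∀ S X : Set V, ↑Λ ⊆ Omega G → IndepSet G S → X ⊆ S \ ⋂₀ ↑Λ →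
      X.ncard ≤ ({y | ∃ x ∈ X, G.Adj x y} ∩ (⋃₀ ↑Λ \ S)).ncard := by
  classical
  induction Λ using Finset.induction_on with
  | empty =>
    intro S X _ _ hX
    have : X = ∅ := by
      apply Set.eq_empty_iff_forall_notMem.mpr
      intro x hx
      exact (hX hx).2 (by simp)
    simp [this]
  | insert _ _ hA ih =>
    rename_i A Λ
    intro S X hΩ hS hX
    have hAΩ : MaxIndep G A := hΩ (by simp)
    have hΛΩ : (↑Λ : Set (Set V)) ⊆ Omega G := fun T hT => hΩ (by simp [hT])
    have hX1 : X \ A ⊆ S \ A := fun x hx => ⟨(hX hx.1).1, hx.2⟩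
    have hX2 : X ∩ A ⊆ S \ ⋂₀ ↑Λ := by
      rintro x ⟨hxX, hxA⟩
      refine ⟨(hX hxX).1, fun hxI => (hX hxX).2 ?_⟩
      simp only [Finset.coe_insert, Set.sInter_insert]
      exact ⟨hxA, hxI⟩
    have h1 := swap_hall hAΩ hS hX1
    have h2 := ih S (X ∩ A) hΛΩ hS hX2
    set N₁ := {y | ∃ x ∈ X \ A, G.Adj x y} ∩ (A \ S) with hN₁
    set N₂ := {y | ∃ x ∈ X ∩ A, G.Adj x y} ∩ (⋃₀ ↑Λ \ S) with hN₂
    have hdisj : Disjoint N₁ N₂ := by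
      rw [Set.disjoint_left]
      rintro y ⟨-, hyA, -⟩ ⟨⟨x, hx, hadj⟩, -⟩
      exact hAΩ.1 x hx.2 y hyA hadj
    have hsub : N₁ ∪ N₂ ⊆ {y | ∃ x ∈ X, G.Adj x y} ∩ (⋃₀ ↑(insert A Λ) \ S) := by
      rintro y (⟨⟨x, hx, hadj⟩, hyA, hyS⟩ | ⟨⟨x, hx, hadj⟩, hyU, hyS⟩)
      · exact ⟨⟨x, hx.1, hadj⟩, by simp [Set.sUnion_insert, hyA], hyS⟩
      · refine ⟨⟨x, hx.1, hadj⟩, ?_, hyS⟩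
        simp only [Finset.coe_insert, Set.sUnion_insert]
        exact Set.mem_union_right _ hyU
    have hXcard : (X ∩ A).ncard + (X \ A).ncard = X.ncard :=
      Set.ncard_inter_add_ncard_diff_eq_ncard X A
    have h6 : (N₁ ∪ N₂).ncard = N₁.ncard + N₂.ncard := Set.ncard_union_eq hdisj
    have h7 : (N₁ ∪ N₂).ncard ≤ ({y | ∃ x ∈ X, G.Adj x y} ∩ (⋃₀ ↑(insert A Λ) \ S)).ncard :=
      Set.ncard_le_ncard hsub (Set.toFinite _)
    omega

lemma exists_matching_fun [Fintype V] {G : SimpleGraph V} {Γ : Set (Set V)} {S : Set V}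
    (hΩ : Γ ⊆ Omega G) (hS : IndepSet G S) :
    ∃ f : ↥(S \ ⋂₀ Γ) → V, Function.Injective f ∧
      ∀ x : ↥(S \ ⋂₀ Γ), f x ∈ ⋃₀ Γ \ S ∧ G.Adj ↑x (f x) := by
  classical
  have hfin : Γ.Finite := Set.toFinite Γ
  set D := S \ ⋂₀ Γ with hD
  set t : ↥D → Finset V := fun x => (G.neighborFinset ↑x) ∩ (⋃₀ Γ \ S).toFinset with ht
  have hall : ∀ s : Finset ↥D, s.card ≤ (s.biUnion t).card := by
    intro s
    have hXsub : Subtype.val '' (↑s : Set ↥D) ⊆ S \ ⋂₀ ↑hfin.toFinset := by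
      rw [hfin.coe_toFinset]
      rintro _ ⟨x, _, rfl⟩; exact x.2
    have key := hall_cond hfin.toFinset S (Subtype.val '' (↑s : Set ↥D))
      (by rw [hfin.coe_toFinset]; exact hΩ) hS hXsub
    rw [hfin.coe_toFinset] at key
    have h1 : (Subtype.val '' (↑s : Set ↥D)).ncard = s.card := by
      rw [Set.ncard_image_of_injective _ Subtype.val_injective, Set.ncard_coe_finset]
    have h2 : {y | ∃ x ∈ Subtype.val '' (↑s : Set ↥D), G.Adj x y} ∩ (⋃₀ Γ \ S)
        = ↑(s.biUnion t) := by
      ext y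
      simp only [Finset.coe_biUnion, Finset.mem_coe, Set.mem_iUnion, ht,
        Finset.mem_inter, SimpleGraph.mem_neighborFinset, Set.mem_toFinset,
        Set.mem_inter_iff, Set.mem_setOf_eq, Set.mem_image]
      constructor
      · rintro ⟨⟨x, ⟨⟨x', hx', rfl⟩, hadj⟩⟩, hyU⟩
        exact ⟨x', hx', hadj, hyU⟩
      · rintro ⟨x, hx, hadj, hyU⟩
        exact ⟨⟨↑x, ⟨x, hx, rfl⟩, hadj⟩, hyU⟩
    rw [h1, h2, Set.ncard_coe_finset] at key
    exact key
  obtain ⟨f, hinj, hf⟩ := (Finset.all_card_le_biUnion_card_iff_exists_injective t).mp hall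
  refine ⟨f, hinj, fun x => ?_⟩
  have := hf x
  simp only [ht, Finset.mem_inter, SimpleGraph.mem_neighborFinset, Set.mem_toFinset] at this
  exact ⟨this.2, this.1⟩

lemma matching_of_fun [Fintype V] {G : SimpleGraph V} {U S D : Set V}
    (hDS : D ⊆ S) (hSU : S ⊆ U)
    (f : ↥D → V) (hinj : Function.Injective f)
    (hf : ∀ x : ↥D, f x ∈ U \ S ∧ G.Adj ↑x (f x)) :
    ∃ M : (G.induce U).Subgraph, M.IsMatching ∧ M.edgeSet.ncard = D.ncard := by
  classical
  have hDU : D ⊆ U := fun x hx => hSU (hDS hx)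
  let M : (G.induce U).Subgraph :=
  { verts := {v : ↥U | (↑v ∈ D) ∨ ∃ x : ↥D, f x = ↑v}
    Adj := fun a b => ∃ x : ↥D,
      ((↑a : V) = ↑x ∧ (↑b : V) = f x) ∨ ((↑a : V) = f x ∧ (↑b : V) = ↑x)
    adj_sub := by
      rintro a b ⟨x, (⟨h1, h2⟩ | ⟨h1, h2⟩)⟩
      · show G.Adj ↑a ↑b
        rw [h1, h2]; exact (hf x).2
      · show G.Adj ↑a ↑b
        rw [h1, h2]; exact ((hf x).2).symm
    edge_vert := by
      rintro a b ⟨x, (⟨h1, h2⟩ | ⟨h1, h2⟩)⟩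
      · exact Or.inl (h1 ▸ x.2)
      · exact Or.inr ⟨x, h1.symm⟩
    symm := by
      refine ⟨?_⟩
      rintro a b ⟨x, (⟨h1, h2⟩ | ⟨h1, h2⟩)⟩
      · exact ⟨x, Or.inr ⟨h2, h1⟩⟩
      · exact ⟨x, Or.inl ⟨h2, h1⟩⟩ }
  have hM : M.IsMatching := by
    rintro v hv
    by_cases hvD : (↑v : V) ∈ D
    · refine ⟨⟨f ⟨↑v, hvD⟩, (hf ⟨↑v, hvD⟩).1.1⟩, ⟨⟨↑v, hvD⟩, Or.inl ⟨rfl, rfl⟩⟩, ?_⟩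
      rintro w' ⟨x', (⟨h1, h2⟩ | ⟨h1, h2⟩)⟩
      · have hx : x' = ⟨↑v, hvD⟩ := Subtype.ext h1.symm
        apply Subtype.ext
        rw [h2, hx]
      · exact absurd (h1 ▸ hDS hvD) (hf x').1.2
    · obtain ⟨x, hx⟩ := hv.resolve_left hvD
      refine ⟨⟨↑x, hDU x.2⟩, ⟨x, Or.inr ⟨hx.symm, rfl⟩⟩, ?_⟩
      rintro w' ⟨x', (⟨h1, h2⟩ | ⟨h1, h2⟩)⟩
      · exact absurd (h1 ▸ x'.2) hvD
      · have hxx : x' = x := hinj (by rw [hx, ← h1])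
        apply Subtype.ext
        rw [h2, hxx]
  let e : ↥D → Sym2 ↥U := fun x => s((⟨↑x, hDU x.2⟩ : ↥U), (⟨f x, (hf x).1.1⟩ : ↥U))
  have hrange : M.edgeSet = Set.range e := by
    ext ed
    induction ed using Sym2.ind with
    | _ a b =>
      rw [SimpleGraph.Subgraph.mem_edgeSet]
      constructor
      · rintro ⟨x, (⟨h1, h2⟩ | ⟨h1, h2⟩)⟩
        · refine ⟨x, ?_⟩
          rw [Sym2.eq_iff]
          exact Or.inl ⟨Subtype.ext h1.symm, Subtype.ext h2.symm⟩
        · refine ⟨x, ?_⟩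
          rw [Sym2.eq_iff]
          exact Or.inr ⟨Subtype.ext h2.symm, Subtype.ext h1.symm⟩
      · rintro ⟨x, hx⟩
        rw [Sym2.eq_iff] at hx
        rcases hx with ⟨h1, h2⟩ | ⟨h1, h2⟩
        · exact ⟨x, Or.inl ⟨(congrArg Subtype.val h1).symm, (congrArg Subtype.val h2).symm⟩⟩
        · exact ⟨x, Or.inr ⟨(congrArg Subtype.val h2).symm, (congrArg Subtype.val h1).symm⟩⟩
  have hei : Function.Injective e := by
    intro x x' hxx
    rw [Sym2.eq_iff] at hxx
    rcases hxx with ⟨h1, _⟩ | ⟨h1, _⟩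
    · exact Subtype.ext (congrArg (fun v : ↥U => (v : V)) h1)
    · exfalso
      have h2 : (↑x : V) = f x' := congrArg (fun v : ↥U => (v : V)) h1
      exact (hf x').1.2 (h2 ▸ hDS x.2)
  refine ⟨M, hM, ?_⟩
  rw [hrange, ← Set.image_univ, Set.ncard_image_of_injective _ hei, Set.ncard_univ,
    Nat.card_coe_set_eq]

lemma matching_le [Fintype V] {G : SimpleGraph V} {U S : Set V} (hSU : S ⊆ U)
    (hS : IndepSet G S) (M : (G.induce U).Subgraph) (hM : M.IsMatching) :
    M.edgeSet.ncard + S.ncard ≤ U.ncard := by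
  classical
  set S' : Set ↥U := Subtype.val ⁻¹' S with hS'
  have hS'card : S'.ncard = S.ncard := by
    have : Subtype.val '' S' = S := by
      rw [hS', Subtype.image_preimage_coe, inter_eq_right.mpr hSU]
    rw [← this, Set.ncard_image_of_injective _ Subtype.val_injective]
  have hchoice : ∀ ed ∈ M.edgeSet, ∃ v : ↥U, v ∈ ed ∧ (↑v : V) ∉ S := by
    intro ed hed
    induction ed using Sym2.ind with
    | _ a b =>
      rw [SimpleGraph.Subgraph.mem_edgeSet] at hed
      have hadj : G.Adj ↑a ↑b := M.adj_sub hed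
      by_contra hcon
      push_neg at hcon
      have ha := hcon a (Sym2.mem_mk_left a b)
      have hb := hcon b (Sym2.mem_mk_right a b)
      exact hS _ ha _ hb hadj
  let φ : Sym2 ↥U → ↥U := fun ed =>
    if h : ∃ v : ↥U, v ∈ ed ∧ (↑v : V) ∉ S then h.choose else (Quot.out ed).1
  have huniq : ∀ ed ∈ M.edgeSet, ∀ v : ↥U, v ∈ ed → ∀ ed' ∈ M.edgeSet, v ∈ ed' → ed = ed' := by
    intro ed hed v hv ed' hed' hv'
    obtain ⟨w, rfl⟩ := Sym2.mem_iff_exists.mp hv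
    obtain ⟨w', rfl⟩ := Sym2.mem_iff_exists.mp hv'
    rw [SimpleGraph.Subgraph.mem_edgeSet] at hed hed'
    have := hM (M.edge_vert hed)
    rw [this.unique hed hed']
  have hmaps : ∀ ed ∈ M.edgeSet, φ ed ∈ {v : ↥U | (↑v : V) ∉ S} := by
    intro ed hed
    simp only [φ, dif_pos (hchoice ed hed)]
    exact (hchoice ed hed).choose_spec.2
  have hinj : Set.InjOn φ M.edgeSet := by
    intro ed1 h1 ed2 h2 heq
    have e1 := hchoice ed1 h1
    have e2 := hchoice ed2 h2
    simp only [φ, dif_pos e1, dif_pos e2] at heq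
    have hv1 := e1.choose_spec.1
    have hv2 := e2.choose_spec.1
    rw [heq] at hv1
    exact (huniq ed1 h1 _ (heq ▸ e1.choose_spec.1) ed2 h2 hv2).symm ▸ rfl
  have hle : M.edgeSet.ncard ≤ {v : ↥U | (↑v : V) ∉ S}.ncard :=
    Set.ncard_le_ncard_of_injOn φ hmaps hinj (Set.toFinite _)
  have hcompl : {v : ↥U | (↑v : V) ∉ S} = Set.univ \ S' := by
    ext v; simp [hS']
  have hsum : (Set.univ \ S').ncard + S'.ncard = (Set.univ : Set ↥U).ncard :=
    Set.ncard_diff_add_ncard_of_subset (Set.subset_univ _)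
  have hUcard : (Set.univ : Set ↥U).ncard = U.ncard := by
    rw [Set.ncard_univ, Nat.card_coe_set_eq]
  rw [hcompl] at hle
  omega

theorem stmt_15 [Fintype V] (G : SimpleGraph V)
    (Γ : Set (Set V)) (hΓ : Γ ⊆ Omega G) (hne : Γ.Nonempty)
    (h : (⋃₀ Γ).ncard + (⋂₀ Γ).ncard = 2 * alpha G) :
    (⋃₀ Γ).ncard - (⋂₀ Γ).ncard = 2 * matchNum (G.induce (⋃₀ Γ)) := by
  classical
  obtain ⟨S, hSΓ⟩ := hne
  have hSΩ : MaxIndep G S := hΓ hSΓ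
  set U := ⋃₀ Γ with hU
  set I := ⋂₀ Γ with hI
  have hSU : S ⊆ U := Set.subset_sUnion_of_mem hSΓ
  have hIS : I ⊆ S := Set.sInter_subset_of_mem hSΓ
  have hα : S.ncard = alpha G := hSΩ.2
  obtain ⟨f, hinj, hf⟩ := exists_matching_fun hΓ hSΩ.1
  obtain ⟨M₀, hM₀, hM₀card⟩ := matching_of_fun Set.diff_subset hSU f hinj hf
  have hD : (S \ I).ncard + I.ncard = S.ncard :=
    Set.ncard_diff_add_ncard_of_subset hIS
  have hmn : matchNum (G.induce U) =
      sSup {n | ∃ M : (G.induce U).Subgraph, M.IsMatching ∧ M.edgeSet.ncard = n} := rfl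
  have hbdd : BddAbove {n | ∃ M : (G.induce U).Subgraph, M.IsMatching ∧ M.edgeSet.ncard = n} := by
    refine ⟨(Set.univ : Set (Sym2 ↥U)).ncard, ?_⟩
    rintro n ⟨M, -, rfl⟩
    exact Set.ncard_le_ncard (Set.subset_univ _) (Set.toFinite _)
  have hge : (S \ I).ncard ≤ matchNum (G.induce U) := by
    rw [hmn]
    exact le_csSup hbdd ⟨M₀, hM₀, hM₀card⟩
  have hle : matchNum (G.induce U) + alpha G ≤ U.ncard := by
    have hub : ∀ n ∈ {n | ∃ M : (G.induce U).Subgraph, M.IsMatching ∧ M.edgeSet.ncard = n},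
        n ≤ U.ncard - alpha G := by
      rintro n ⟨M, hM, rfl⟩
      have := matching_le hSU hSΩ.1 M hM
      omega
    have h1 : matchNum (G.induce U) ≤ U.ncard - alpha G := by
      rw [hmn]
      exact csSup_le ⟨(S \ I).ncard, M₀, hM₀, hM₀card⟩ hub
    have h2 : alpha G ≤ U.ncard := hα ▸ Set.ncard_le_ncard hSU (Set.toFinite _)
    omega
  have hIcard : I.ncard ≤ S.ncard := Set.ncard_le_ncard hIS (Set.toFinite _)
  have hSUcard : S.ncard ≤ U.ncard := Set.ncard_le_ncard hSU (Set.toFinite _)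
  omega
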